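/- For every n : ℕ, with s := Nat.sqrt n, one has in ℚ: ∑ t in Finset.range (n+1), ((s+1 : ℚ)/(s+t+1)) * (n.choose (s+2*t)) * ((s+2*t).choose t) = ∑ t in Finset.range (n+1), ((s+1 : ℚ)/(s+t+1)) * (n.choose t) * ((n - t).choose (s+t)), where n − t is truncated subtraction. -/

import Mathlib

lemma key (n s t : ℕ) :
    (n.choose (s + 2*t)) * ((s + 2*t).choose t) = (n.choose t) * ((n - t).choose (s + t)) := by
  by_cases h : s + 2*t ≤ n
  · have := Nat.choose_mul (n := n) (by omega : t ≤ s + 2*t)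
    rwa [show s + 2*t - t = s + t by omega] at this
  · rw [Nat.choose_eq_zero_of_lt (by omega), Nat.zero_mul]
    by_cases ht : t ≤ n
    · rw [Nat.choose_eq_zero_of_lt (show n - t < s + t by omega), Nat.mul_zero]
    · rw [Nat.choose_eq_zero_of_lt (show n < t by omega), Nat.zero_mul]

/-- Rewriting of the semisimple dimension of the cell with ⌊√n⌋ through strands. -/
theorem cell_size_rewrite (n : ℕ) :
    ∑ t ∈ Finset.range (n+1),
        ((Nat.sqrt n + 1 : ℚ)/((Nat.sqrt n : ℚ)+(t : ℚ)+1)) *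
          (n.choose (Nat.sqrt n + 2*t) : ℚ) * ((Nat.sqrt n + 2*t).choose t : ℚ) =
      ∑ t ∈ Finset.range (n+1),
        ((Nat.sqrt n + 1 : ℚ)/((Nat.sqrt n : ℚ)+(t : ℚ)+1)) *
          (n.choose t : ℚ) * ((n - t).choose (Nat.sqrt n + t) : ℚ) := by
  refine Finset.sum_congr rfl fun t _ => ?_
  rw [mul_assoc, mul_assoc, ← Nat.cast_mul, ← Nat.cast_mul, key n (Nat.sqrt n) t]
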